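/- arXiv:1502.05748 — 3 statements merged into one kernel-verified Lean document; each statement's English description precedes it below -/
import Mathlib

section
/- Let φ(x₁,…,xₙ) be a propositional formula and a₁,…,aₙ an M-valuation with |φ(a₁,…,aₙ)| = |aᵢ|, where |a₁| ≤ ⋯ ≤ |a_{i−1}| < |aᵢ| ≤ ⋯ ≤ |aₙ|. Then for any two binary valuations b, b′ ∈ {T,F}ⁿ that both satisfy b_j = p(a_j) and b′_j = p(a_j) for all j ≥ i (and are arbitrary on positions 1,…,i−1), the binary evaluations agree: φ(b₁,…,bₙ) = φ(b′₁,…,b′ₙ); moreover this common value equals p(φ(a₁,…,aₙ)). -/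
/-- Propositional formulas over `n` variables, built from `¬`, `∧`, `∨`. -/
inductive PropForm (n : ℕ) : Type where
  | var : Fin n → PropForm n
  | neg : PropForm n → PropForm n
  | conj : PropForm n → PropForm n → PropForm n
  | disj : PropForm n → PropForm n → PropForm n

namespace PropForm

/-- The multiple-valued semantics `M` over the integers:
`∧` is `min`, `∨` is `max`, `¬` is integer negation. -/
def evalM {n : ℕ} (v : Fin n → ℤ) : PropForm n → ℤ
  | var i => v i
  | neg φ => -(evalM v φ)
  | conj φ ψ => min (evalM v φ) (evalM v ψ)
  | disj φ ψ => max (evalM v φ) (evalM v ψ)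

/-- The binary semantics `B₂` over `Bool`. -/
def evalB {n : ℕ} (b : Fin n → Bool) : PropForm n → Bool
  | var i => b i
  | neg φ => !(evalB b φ)
  | conj φ ψ => evalB b φ && evalB b ψ
  | disj φ ψ => evalB b φ || evalB b ψ

theorem evalM_ne_zero {n : ℕ} (a : Fin n → ℤ) (ha : ∀ j, a j ≠ 0) :
    ∀ φ : PropForm n, evalM a φ ≠ 0 := by
  intro φ
  induction φ with
  | var i => exact ha i
  | neg ψ ih => simpa [evalM] using ih
  | conj ψ χ ih1 ih2 =>
    simp only [evalM]
    rcases min_cases (evalM a ψ) (evalM a χ) with ⟨h, _⟩ | ⟨h, _⟩ <;> rw [h] <;> assumption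
  | disj ψ χ ih1 ih2 =>
    simp only [evalM]
    rcases max_cases (evalM a ψ) (evalM a χ) with ⟨h, _⟩ | ⟨h, _⟩ <;> rw [h] <;> assumption

theorem key {n : ℕ} (a : Fin n → ℤ) (ha : ∀ j, a j ≠ 0) (b : Fin n → Bool) :
    ∀ φ : PropForm n, (∀ j, |evalM a φ| ≤ |a j| → b j = decide (0 < a j)) →
    evalB b φ = decide (0 < evalM a φ) := by
  intro φ
  induction φ with
  | var i => intro h; exact h i le_rfl
  | neg ψ ih =>
    intro h
    have hψ := ih (by simpa [evalM, abs_neg] using h)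
    have hne := evalM_ne_zero a ha ψ
    simp only [evalB, evalM, hψ]
    rcases hne.lt_or_gt with h' | h' <;>
      simp [h', h'.not_gt, h'.le, not_lt.2 h'.le, Int.neg_pos, neg_neg, le_of_lt]
  | conj ψ χ ih1 ih2 =>
    intro h
    simp only [evalM] at h ⊢
    simp only [evalB]
    have hun := evalM_ne_zero a ha ψ
    have hvn := evalM_ne_zero a ha χ
    rcases le_total (evalM a ψ) (evalM a χ) with huv | hvu
    · rw [min_eq_left huv] at h
      simp only [min_eq_left huv]
      have h1 := ih1 h
      rcases hun.lt_or_gt with hneg | hpos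
      · rw [h1]; simp [hneg.not_gt]
      · have hvpos : 0 < evalM a χ := lt_of_lt_of_le hpos huv
        have h2 := ih2 (fun j hj => h j (le_trans (by
          rw [abs_of_pos hpos, abs_of_pos hvpos]; exact huv) hj))
        rw [h1, h2]; simp [hpos, hvpos]
    · rw [min_eq_right hvu] at h
      simp only [min_eq_right hvu]
      have h2 := ih2 h
      rcases hvn.lt_or_gt with hneg | hpos
      · rw [h2]; simp [hneg.not_gt]
      · have hupos : 0 < evalM a ψ := lt_of_lt_of_le hpos hvu
        have h1 := ih1 (fun j hj => h j (le_trans (by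
          rw [abs_of_pos hpos, abs_of_pos hupos]; exact hvu) hj))
        rw [h1, h2]; simp [hpos, hupos]
  | disj ψ χ ih1 ih2 =>
    intro h
    simp only [evalM] at h ⊢
    simp only [evalB]
    have hun := evalM_ne_zero a ha ψ
    have hvn := evalM_ne_zero a ha χ
    rcases le_total (evalM a ψ) (evalM a χ) with huv | hvu
    · rw [max_eq_right huv] at h
      simp only [max_eq_right huv]
      have h2 := ih2 h
      rcases hvn.lt_or_gt with hneg | hpos
      · have huneg : evalM a ψ < 0 := lt_of_le_of_lt huv hneg
        have h1 := ih1 (fun j hj => h j (le_trans (by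
          rw [abs_of_neg hneg, abs_of_neg huneg]; omega) hj))
        rw [h1, h2]; simp [hneg.not_gt, huneg.not_gt]
      · rw [h2]; simp [hpos]
    · rw [max_eq_left hvu] at h
      simp only [max_eq_left hvu]
      have h1 := ih1 h
      rcases hun.lt_or_gt with hneg | hpos
      · have hvneg : evalM a χ < 0 := lt_of_le_of_lt hvu hneg
        have h2 := ih2 (fun j hj => h j (le_trans (by
          rw [abs_of_neg hneg, abs_of_neg hvneg]; omega) hj))
        rw [h1, h2]; simp [hneg.not_gt, hvneg.not_gt]
      · rw [h1]; simp [hpos]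

end PropForm

/-- if `|⟦φ⟧ₐ| = |a i|` with `|a 0| ≤ ⋯ ≤ |a (i-1)| < |a i| ≤ ⋯ ≤ |a (n-1)|`,
then the binary evaluation of `φ` does not depend on the entries below position `i`,
as long as from position `i` on the binary valuation agrees with the sign map `p` of
the `M`-valuation; moreover the common value is `p(⟦φ⟧ₐ)`. -/
theorem binary_indep_of_small_entries {n : ℕ} (φ : PropForm n) (a : Fin n → ℤ)
    (ha : ∀ j, a j ≠ 0) (i : Fin n)
    (hmono : ∀ j k : Fin n, j ≤ k → |a j| ≤ |a k|)
    (hstrict : ∀ j : Fin n, j < i → |a j| < |a i|)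
    (habs : |PropForm.evalM a φ| = |a i|)
    (b b' : Fin n → Bool)
    (hb : ∀ j, i ≤ j → b j = decide (0 < a j))
    (hb' : ∀ j, i ≤ j → b' j = decide (0 < a j)) :
    PropForm.evalB b φ = PropForm.evalB b' φ ∧
    PropForm.evalB b φ = decide (0 < PropForm.evalM a φ) := by
  have key_hyp : ∀ (c : Fin n → Bool), (∀ j, i ≤ j → c j = decide (0 < a j)) →
      ∀ j, |PropForm.evalM a φ| ≤ |a j| → c j = decide (0 < a j) := by
    intro c hc j hj
    apply hc
    by_contra hij
    push_neg at hij
    rw [habs] at hj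
    exact absurd hj (not_le.2 (hstrict j hij))
  have k1 := PropForm.key a ha b φ (key_hyp b hb)
  have k2 := PropForm.key a ha b' φ (key_hyp b' hb')
  exact ⟨k1.trans k2.symm, k1⟩
end

section
/- Let φ(x₁,…,xₙ) be a propositional formula and a₁,…,aₙ an M-valuation with |φ(a₁,…,aₙ)| = b. Let a′₁,…,a′ₙ be another M-valuation such that for each index j one of the following holds: (i) a′_j = a_j; or (ii) |a_j| < b and |a′_j| < b (the sign may change arbitrarily); or (iii) |a_j| > b, |a′_j| > b, and a′_j has the same sign as a_j. Then φ(a′₁,…,a′ₙ) = φ(a₁,…,aₙ). -/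
/-- The invariant relation preserved by the connectives. -/
def Rinv (b x y : ℤ) : Prop :=
  x = y ∨ (|x| < b ∧ |y| < b) ∨ (b < |x| ∧ b < |y| ∧ (0 < x ↔ 0 < y))

lemma Rinv_neg (b x y : ℤ) (h0 : 0 ≤ b) (h : Rinv b x y) : Rinv b (-x) (-y) := by
  simp only [Rinv, abs_lt, lt_abs] at *; omega

lemma Rinv_min (b x₁ y₁ x₂ y₂ : ℤ) (h0 : 0 ≤ b) (h1 : Rinv b x₁ y₁) (h2 : Rinv b x₂ y₂) :
    Rinv b (min x₁ x₂) (min y₁ y₂) := by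
  simp only [Rinv, abs_lt, lt_abs, min_def] at *; split_ifs <;> omega

lemma Rinv_max (b x₁ y₁ x₂ y₂ : ℤ) (h0 : 0 ≤ b) (h1 : Rinv b x₁ y₁) (h2 : Rinv b x₂ y₂) :
    Rinv b (max x₁ x₂) (max y₁ y₂) := by
  simp only [Rinv, abs_lt, lt_abs, max_def] at *; split_ifs <;> omega

/-- the `M`-value of `φ` is invariant under any change of the
arguments of absolute value less than `b = |⟦φ⟧ₐ|` (sign changes allowed) and
under sign-preserving changes of the arguments of absolute value greater
than `b`. -/
theorem evalM_invariant {n : ℕ} (φ : PropForm n) (a a' : Fin n → ℤ)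
    (ha : ∀ j, a j ≠ 0) (ha' : ∀ j, a' j ≠ 0)
    (b : ℤ) (hb : |PropForm.evalM a φ| = b)
    (h : ∀ j, a' j = a j ∨
      (|a j| < b ∧ |a' j| < b) ∨
      (b < |a j| ∧ b < |a' j| ∧ (0 < a j ↔ 0 < a' j))) :
    PropForm.evalM a' φ = PropForm.evalM a φ := by
  have h0 : 0 ≤ b := hb ▸ abs_nonneg _
  have key : ∀ ψ : PropForm n, Rinv b (PropForm.evalM a' ψ) (PropForm.evalM a ψ) := by
    intro ψ
    induction ψ with
    | var i =>
        rcases h i with heq | ⟨p, q⟩ | ⟨p, q, r⟩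
        · exact Or.inl heq
        · exact Or.inr (Or.inl ⟨q, p⟩)
        · exact Or.inr (Or.inr ⟨q, p, r.symm⟩)
    | neg ψ ih => exact Rinv_neg _ _ _ h0 ih
    | conj ψ₁ ψ₂ ih₁ ih₂ => exact Rinv_min _ _ _ _ _ h0 ih₁ ih₂
    | disj ψ₁ ψ₂ ih₁ ih₂ => exact Rinv_max _ _ _ _ _ h0 ih₁ ih₂
  rcases key φ with heq | ⟨_, hlt⟩ | ⟨_, hgt, _⟩
  · exact heq
  · omega
  · omega
end

section
/- Let φ and ψ be propositional formulas, let Φ be a DNF that is M-equivalent to φ, and let Ψ be a DNF that is M-equivalent to ψ. Suppose Φ has a non-contradictory term γ in which no variable occurs twice, and suppose no non-contradictory term of Ψ is a subterm of γ. Then there exists an M-valuation v (namely: assign 2 to each variable occurring positively in γ, −2 to each variable occurring negatively in γ, and 1 to every other variable) such that 0 < ⟦φ⟧_v and ⟦ψ⟧_v < ⟦φ⟧_v. -/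
/-- A literal: a variable together with a polarity (`true` = positive). -/
abbrev Lit (n : ℕ) := Fin n × Bool

/-- `M`-value of a literal under a valuation. -/
def litValM {n : ℕ} (v : Fin n → ℤ) (l : Lit n) : ℤ :=
  if l.2 then v l.1 else -(v l.1)

/-- Binary value of a literal under a binary valuation. -/
def litValB {n : ℕ} (b : Fin n → Bool) (l : Lit n) : Bool :=
  if l.2 then b l.1 else !(b l.1)

/-- `M`-value of a conjunctive term (a list of literals), the minimum of the
literal values (for nonempty terms; the value on `[]` is a dummy). -/
def Term.evalM {n : ℕ} (v : Fin n → ℤ) : List (Lit n) → ℤ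
  | [] => 0
  | [l] => litValM v l
  | l :: ls => min (litValM v l) (Term.evalM v ls)

/-- Binary value of a conjunctive term: the conjunction of its literal values. -/
def Term.evalB {n : ℕ} (b : Fin n → Bool) (t : List (Lit n)) : Bool :=
  t.all (litValB b)

/-- `M`-value of a DNF (a list of conjunctive terms), the maximum of the
term values (for nonempty DNFs; the value on `[]` is a dummy). -/
def DNF.evalM {n : ℕ} (v : Fin n → ℤ) : List (List (Lit n)) → ℤ
  | [] => 0
  | [t] => Term.evalM v t
  | t :: ts => max (Term.evalM v t) (DNF.evalM v ts)

/-- A term is contradictory if it contains both `x` and `¬x` for some variable. -/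
def Contra {n : ℕ} (t : List (Lit n)) : Prop :=
  ∃ i : Fin n, ((i, true) : Lit n) ∈ t ∧ ((i, false) : Lit n) ∈ t

lemma term_le_lit {n : ℕ} (v : Fin n → ℤ) {t : List (Lit n)} {l : Lit n}
    (hl : l ∈ t) : Term.evalM v t ≤ litValM v l := by
  induction t with
  | nil => cases hl
  | cons a ts ih =>
    cases ts with
    | nil => simp at hl; subst hl; simp [Term.evalM]
    | cons b ts' =>
      rcases List.mem_cons.mp hl with h | h
      · subst h; exact min_le_left _ _
      · exact le_trans (min_le_right _ _) (ih h)

lemma term_ge {n : ℕ} (v : Fin n → ℤ) {t : List (Lit n)} {c : ℤ}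
    (ht : t ≠ []) (h : ∀ l ∈ t, c ≤ litValM v l) : c ≤ Term.evalM v t := by
  induction t with
  | nil => exact absurd rfl ht
  | cons a ts ih =>
    cases ts with
    | nil => simpa [Term.evalM] using h a (by simp)
    | cons b ts' =>
      refine le_min (h a (by simp)) (ih (by simp) ?_)
      intro l hl; exact h l (List.mem_cons_of_mem _ hl)

lemma dnf_ge {n : ℕ} (v : Fin n → ℤ) {Φ : List (List (Lit n))} {t : List (Lit n)}
    (ht : t ∈ Φ) : Term.evalM v t ≤ DNF.evalM v Φ := by
  induction Φ with
  | nil => cases ht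
  | cons a ts ih =>
    cases ts with
    | nil => simp at ht; subst ht; simp [DNF.evalM]
    | cons b ts' =>
      rcases List.mem_cons.mp ht with h | h
      · subst h; exact le_max_left _ _
      · exact le_trans (ih h) (le_max_right _ _)

lemma dnf_le {n : ℕ} (v : Fin n → ℤ) {Φ : List (List (Lit n))} {c : ℤ}
    (hΦ : Φ ≠ []) (h : ∀ t ∈ Φ, Term.evalM v t ≤ c) : DNF.evalM v Φ ≤ c := by
  induction Φ with
  | nil => exact absurd rfl hΦ
  | cons a ts ih =>
    cases ts with
    | nil => simpa [DNF.evalM] using h a (by simp)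
    | cons b ts' =>
      refine max_le (h a (by simp)) (ih (by simp) ?_)
      intro l hl; exact h l (List.mem_cons_of_mem _ hl)

/-- if a DNF `Φ` that is `M`-equivalent to `φ` has a non-contradictory
term `γ` with no repeated variable, and no non-contradictory term of a DNF `Ψ`
`M`-equivalent to `ψ` is a subterm of `γ`, then the valuation assigning `2` to the
positive variables of `γ`, `-2` to its negative variables and `1` elsewhere makes
`0 < ⟦φ⟧ᵥ` and `⟦ψ⟧ᵥ < ⟦φ⟧ᵥ`. -/
theorem exists_valuation_gt {n : ℕ} (φ ψ : PropForm n)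
    (Φ Ψ : List (List (Lit n)))
    (hΦne : Φ ≠ []) (hΦt : ∀ t ∈ Φ, t ≠ [])
    (hΨne : Ψ ≠ []) (hΨt : ∀ t ∈ Ψ, t ≠ [])
    (hΦ : ∀ v : Fin n → ℤ, (∀ i, v i ≠ 0) → DNF.evalM v Φ = PropForm.evalM v φ)
    (hΨ : ∀ v : Fin n → ℤ, (∀ i, v i ≠ 0) → DNF.evalM v Ψ = PropForm.evalM v ψ)
    (γ : List (Lit n)) (hγ : γ ∈ Φ) (hγc : ¬ Contra γ)
    (hγnd : (γ.map Prod.fst).Nodup)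
    (hsub : ∀ δ ∈ Ψ, ¬ Contra δ → ¬ (∀ l ∈ δ, l ∈ γ))
    (v : Fin n → ℤ)
    (hv : ∀ i : Fin n, v i =
      if ((i, true) : Lit n) ∈ γ then 2
      else if ((i, false) : Lit n) ∈ γ then -2 else 1) :
    0 < PropForm.evalM v φ ∧ PropForm.evalM v ψ < PropForm.evalM v φ := by
  have hv0 : ∀ i, v i ≠ 0 := by
    intro i; rw [hv i]; split_ifs <;> norm_num
  -- literal in γ has value 2
  have e1 : ∀ i : Fin n, litValM v (i, true) = v i := fun i => by simp [litValM]
  have e2 : ∀ i : Fin n, litValM v (i, false) = -(v i) := fun i => by simp [litValM]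
  have hlit_in : ∀ l ∈ γ, litValM v l = 2 := by
    rintro ⟨i, b⟩ hl
    cases b with
    | true => rw [e1, hv i, if_pos hl]
    | false =>
      have hpos : ((i, true) : Lit n) ∉ γ := fun h => hγc ⟨i, h, hl⟩
      rw [e2, hv i, if_neg hpos, if_pos hl]; norm_num
  -- literal not in γ has value ≤ 1
  have hlit_out : ∀ l : Lit n, l ∉ γ → litValM v l ≤ 1 := by
    rintro ⟨i, b⟩ hl
    cases b with
    | true =>
      rw [e1, hv i, if_neg hl]; split_ifs <;> norm_num
    | false =>
      rw [e2, hv i]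
      by_cases h1 : ((i, true) : Lit n) ∈ γ
      · rw [if_pos h1]; norm_num
      · rw [if_neg h1, if_neg hl]; norm_num
  have hlit_le2 : ∀ l : Lit n, litValM v l ≤ 2 := by
    intro l
    by_cases h : l ∈ γ
    · exact le_of_eq (hlit_in l h)
    · linarith [hlit_out l h]
  -- φ's value is 2
  have hγ2 : Term.evalM v γ = 2 := by
    have h1 : (2 : ℤ) ≤ Term.evalM v γ :=
      term_ge v (hΦt γ hγ) (fun l hl => le_of_eq (hlit_in l hl).symm)
    have h2 : Term.evalM v γ ≤ litValM v (γ.head (hΦt γ hγ)) :=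
      term_le_lit v (List.head_mem _)
    linarith [hlit_le2 (γ.head (hΦt γ hγ))]
  have hφ2 : PropForm.evalM v φ = 2 := by
    rw [← hΦ v hv0]
    have h1 : (2 : ℤ) ≤ DNF.evalM v Φ := hγ2 ▸ dnf_ge v hγ
    have h2 : DNF.evalM v Φ ≤ 2 := by
      refine dnf_le v hΦne (fun t ht => ?_)
      have := term_le_lit v (List.head_mem (hΦt t ht))
      linarith [hlit_le2 (t.head (hΦt t ht))]
    linarith
  -- ψ's value ≤ 1
  have hψ1 : PropForm.evalM v ψ ≤ 1 := by
    rw [← hΨ v hv0]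
    refine dnf_le v hΨne (fun δ hδ => ?_)
    by_cases hc : Contra δ
    · obtain ⟨i, hp, hn⟩ := hc
      have h1 := term_le_lit v hp
      have h2 := term_le_lit v hn
      rw [e1] at h1; rw [e2] at h2; linarith
    · have h := hsub δ hδ hc
      push_neg at h
      obtain ⟨l, hl, hlγ⟩ := h
      exact le_trans (term_le_lit v hl) (hlit_out l hlγ)
  exact ⟨by rw [hφ2]; norm_num, by rw [hφ2]; linarith⟩
end
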